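/- Let b ≥ 10 and γ ∈ (1,2), and let m ≥ 0 be an integer. There exist constants A₀ = A₀(b,γ,m) ≥ 2, C_m = C(b,γ,m) > 0 and C = C(b,γ) > 0 such that for every real A ≥ A₀, defining M_k = ⌊A^{b^k}⌋ and N_k = M_k ⌊M_k^{γ−1}⌋ for k ∈ ℕ, the following hold: (i) for all t > 0, Σ_{k≥0} N_k^{1+m} exp(−N_k² t) ≤ C_m t^{−(m+1)/2} exp(−N₀² t / C_m); and (ii) for all 0 < t₁ ≤ t₂ ≤ 1, ∫_{t₁}^{t₂} (Σ_{k≥0} N_k exp(−N_k² t))² dt + ∫_{t₁}^{t₂} t^{−1/2} Σ_{k≥0} N_k exp(−N_k² t) dt ≤ C (1 + (log A)^{−1} log(t₂/t₁)). -/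

import Mathlib

open Real Set

namespace SeriesEstAux

open Finset MeasureTheory intervalIntegral Filter

lemma geom_lower (N : ℕ → ℕ) (hd : ∀ k, 2 * N k ≤ N (k+1)) :
    ∀ j i, 2 ^ i * N j ≤ N (j + i) := by
  intro j i
  induction i with
  | zero => simp
  | succ i ih =>
    have h1 := hd (j + i)
    have h2 : 2 ^ (i+1) * N j = 2 * (2 ^ i * N j) := by ring
    have h3 : j + (i+1) = (j + i) + 1 := rfl
    rw [h3]
    omega

lemma ratio_lower (N : ℕ → ℕ) (A : ℝ) (hA : 0 ≤ A) (h : ∀ k, A * N k ≤ N (k+1)) :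
    ∀ j i, A ^ i * N j ≤ N (j + i) := by
  intro j i
  induction i with
  | zero => simp
  | succ i ih =>
    calc A ^ (i+1) * (N j : ℝ) = A * (A ^ i * N j) := by ring
    _ ≤ A * N (j + i) := mul_le_mul_of_nonneg_left ih hA
    _ ≤ N (j + i + 1) := h _

lemma geom_lower_real (y : ℕ → ℝ) (hd : ∀ k, 2 * y k ≤ y (k+1)) :
    ∀ j i, 2 ^ i * y j ≤ y (j + i) := by
  intro j i
  induction i with
  | zero => simp
  | succ i ih =>
    calc (2:ℝ) ^ (i+1) * y j = 2 * (2 ^ i * y j) := by ring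
    _ ≤ 2 * y (j + i) := by linarith
    _ ≤ y (j + i + 1) := hd _

/-- key bound for doubled sequences: `∑ y_k^p e^{-y_k²} ≤ 6 p!`. -/
lemma key_y (y : ℕ → ℝ) (hy : ∀ k, 0 < y k) (hd : ∀ k, 2 * y k ≤ y (k+1))
    (p : ℕ) (hp : 1 ≤ p) (n : ℕ) :
    ∑ k ∈ Finset.range n, y k ^ p * Real.exp (-(y k)^2) ≤ 6 * p.factorial := by
  classical
  have hgeom := geom_lower_real y hd
  -- existence of an index with 1 ≤ y k
  have hex : ∃ k, 1 ≤ y k := by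
    obtain ⟨i, hi⟩ := pow_unbounded_of_one_lt ((y 0)⁻¹) (one_lt_two (α := ℝ))
    refine ⟨i, ?_⟩
    have h2 : (y 0)⁻¹ * y 0 < 2 ^ i * y 0 := mul_lt_mul_of_pos_right hi (hy 0)
    rw [inv_mul_cancel₀ (hy 0).ne'] at h2
    have := hgeom 0 i
    simp only [Nat.zero_add] at this
    linarith
  set K := Nat.find hex with hKdef
  have hK : 1 ≤ y K := Nat.find_spec hex
  have hKlt : ∀ k, k < K → y k < 1 := fun k hk => not_le.mp (Nat.find_min hex hk)
  set h : ℕ → ℝ := fun k => if k < K then (2:ℝ)^(k+1) / 2^K else 2 * p.factorial * (2/3:ℝ)^(k - K + 1) with hh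
  have hpt : ∀ k, y k ^ p * Real.exp (-(y k)^2) ≤ h k := by
    intro k
    by_cases hk : k < K
    · -- small regime
      have hK1 : K - 1 - k + k = K - 1 := by omega
      have h1 : 2 ^ (K-1-k) * y k ≤ y (K-1) := by
        have := hgeom k (K-1-k); rwa [Nat.add_comm k _, hK1] at this
      have h2 : y (K-1) < 1 := hKlt _ (by omega)
      have h3 : y k ≤ 1 / 2 ^ (K-1-k) := by
        rw [le_div_iff₀ (by positivity)]
        nlinarith [h1, h2]
      have hKeq : (2:ℝ) ^ K = 2 ^ (k+1) * 2 ^ (K-1-k) := by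
        rw [← pow_add]; congr 1; omega
      have h4 : y k ≤ (2:ℝ)^(k+1) / 2^K := by
        rw [hKeq]
        calc y k ≤ 1 / 2 ^ (K-1-k) := h3
        _ = (2:ℝ)^(k+1) / ((2:ℝ)^(k+1) * 2 ^ (K-1-k)) := by
            rw [div_mul_eq_div_div]
            congr 1
            rw [div_self (by positivity)]
        _ ≤ _ := le_refl _
      have hy1 : y k ≤ 1 := by
        have : (1:ℝ) ≤ 2 ^ (K-1-k) := one_le_pow₀ one_le_two
        calc y k ≤ 1 / 2 ^ (K-1-k) := h3
        _ ≤ 1 := by rw [div_le_one (by positivity)]; exact this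
      have hpow : y k ^ p ≤ y k := by
        calc y k ^ p ≤ y k ^ 1 := pow_le_pow_of_le_one (hy k).le hy1 hp
        _ = y k := pow_one _
      have hexp : Real.exp (-(y k)^2) ≤ 1 := by
        rw [Real.exp_le_one_iff]; exact neg_nonpos.mpr (sq_nonneg _)
      simp only [hh, if_pos hk]
      calc y k ^ p * Real.exp (-(y k)^2) ≤ y k * 1 := by
            apply mul_le_mul hpow hexp (Real.exp_nonneg _) (hy k).le
      _ = y k := mul_one _
      _ ≤ _ := h4
    · -- large regime
      push_neg at hk
      have h1 : (2:ℝ) ^ (k - K) ≤ y k := by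
        have := hgeom K (k - K)
        rw [Nat.add_sub_cancel' hk] at this
        nlinarith [this, hK, pow_pos (two_pos (α := ℝ)) (k-K)]
      have hy2 : (4:ℝ) ^ (k - K) ≤ (y k)^2 := by
        have : ((2:ℝ) ^ (k-K))^2 ≤ (y k)^2 := by
          apply pow_le_pow_left₀ (by positivity) h1
        calc (4:ℝ)^(k-K) = ((2:ℝ)^(k-K))^2 := by
              rw [← pow_mul, Nat.mul_comm, pow_mul]; norm_num
        _ ≤ _ := this
      -- y^p ≤ p! exp y
      have hfac : y k ^ p ≤ p.factorial * Real.exp (y k) := by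
        have h0 := Real.pow_div_factorial_le_exp (x := y k) (hy k).le p
        rw [div_le_iff₀ (by positivity : (0:ℝ) < (p.factorial:ℝ))] at h0
        linarith [h0]
      have hexp2 : Real.exp (y k) * Real.exp (-(y k)^2) ≤ Real.exp (1/2) * Real.exp (-(y k)^2/2) := by
        rw [← Real.exp_add, ← Real.exp_add]
        apply Real.exp_le_exp.mpr
        nlinarith [sq_nonneg (y k - 1)]
      have he2 : Real.exp (1/2 : ℝ) ≤ 2 := by
        have hl2 : (1/2 : ℝ) < Real.log 2 := by
          have := Real.log_two_gt_d9; linarith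
        have := Real.exp_lt_exp.mpr hl2
        rw [Real.exp_log two_pos] at this
        linarith
      have hexp3 : Real.exp (-(y k)^2/2) ≤ (2/3:ℝ)^(k - K + 1) := by
        have h43 : -(y k)^2/2 ≤ -(4:ℝ)^(k-K)/2 := by linarith
        have step1 : Real.exp (-(y k)^2/2) ≤ Real.exp (-(4:ℝ)^(k-K)/2) := Real.exp_le_exp.mpr h43
        have step2 : Real.exp (-(4:ℝ)^(k-K)/2) = Real.exp (-(1/2)) ^ (4^(k-K) : ℕ) := by
          rw [← Real.exp_nat_mul]
          congr 1
          push_cast [pow_succ]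
          ring
        have he3 : Real.exp (-(1/2 : ℝ)) ≤ 2/3 := by
          have h32 : (3/2 : ℝ) ≤ Real.exp (1/2) := by
            have := Real.add_one_le_exp (1/2 : ℝ); linarith
          rw [Real.exp_neg]
          rw [inv_le_comm₀ (Real.exp_pos _) (by norm_num)]
          linarith
        have step3 : Real.exp (-(1/2:ℝ)) ^ (4^(k-K) : ℕ) ≤ (2/3:ℝ) ^ (4^(k-K) : ℕ) :=
          pow_le_pow_left₀ (Real.exp_nonneg _) he3 _
        have hexle : k - K + 1 ≤ 4 ^ (k - K) := Nat.succ_le_of_lt (Nat.lt_pow_self (a := 4) (by norm_num))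
        have step4 : (2/3:ℝ) ^ (4^(k-K) : ℕ) ≤ (2/3:ℝ) ^ (k - K + 1) :=
          pow_le_pow_of_le_one (by norm_num) (by norm_num) hexle
        calc Real.exp (-(y k)^2/2) ≤ _ := step1
        _ = _ := step2
        _ ≤ _ := step3
        _ ≤ _ := step4
      simp only [hh, if_neg (not_lt.mpr hk)]
      calc y k ^ p * Real.exp (-(y k)^2)
          ≤ (p.factorial * Real.exp (y k)) * Real.exp (-(y k)^2) := by
            apply mul_le_mul_of_nonneg_right hfac (Real.exp_nonneg _)
      _ = p.factorial * (Real.exp (y k) * Real.exp (-(y k)^2)) := by ring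
      _ ≤ p.factorial * (Real.exp (1/2) * Real.exp (-(y k)^2/2)) := by
            apply mul_le_mul_of_nonneg_left hexp2 (by positivity)
      _ ≤ p.factorial * (2 * (2/3:ℝ)^(k - K + 1)) := by
            apply mul_le_mul_of_nonneg_left _ (by positivity)
            apply mul_le_mul he2 hexp3 (Real.exp_nonneg _) (by norm_num)
      _ = 2 * p.factorial * (2/3:ℝ)^(k - K + 1) := by ring
  -- now sum the dominating function
  have hsum : ∑ k ∈ Finset.range n, h k ≤ 6 * p.factorial := by
    rw [← Finset.sum_filter_add_sum_filter_not (Finset.range n) (· < K)]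
    have part1 : ∑ k ∈ (Finset.range n).filter (· < K), h k ≤ 2 := by
      have hsub : (Finset.range n).filter (· < K) ⊆ Finset.range K := by
        intro k hk
        simp only [Finset.mem_filter, Finset.mem_range] at hk ⊢
        exact hk.2
      have heq : ∀ k ∈ (Finset.range n).filter (· < K), h k = (2:ℝ)^(k+1) / 2^K := by
        intro k hk
        simp only [Finset.mem_filter] at hk
        simp only [hh, if_pos hk.2]
      rw [Finset.sum_congr rfl heq]
      calc ∑ k ∈ (Finset.range n).filter (· < K), (2:ℝ)^(k+1) / 2^K
          ≤ ∑ k ∈ Finset.range K, (2:ℝ)^(k+1) / 2^K := by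
            apply Finset.sum_le_sum_of_subset_of_nonneg hsub
            intro k _ _; positivity
      _ = (∑ k ∈ Finset.range K, (2:ℝ)^(k+1)) / 2^K := by rw [Finset.sum_div]
      _ ≤ (2:ℝ)^(K+1) / 2^K := by
            apply div_le_div_of_nonneg_right ?_ (by positivity)
            have heq2 : ∑ k ∈ Finset.range K, (2:ℝ)^(k+1) = 2 * ∑ k ∈ Finset.range K, (2:ℝ)^k := by
              rw [Finset.mul_sum]; apply Finset.sum_congr rfl; intro k _; ring
            rw [heq2, geom_sum_eq (by norm_num : (2:ℝ) ≠ 1), pow_succ]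
            nlinarith [pow_pos (two_pos (α := ℝ)) K]
      _ = 2 := by rw [pow_succ]; field_simp
    have part2 : ∑ k ∈ (Finset.range n).filter (¬ · < K), h k ≤ 4 * p.factorial := by
      have heq : ∀ k ∈ (Finset.range n).filter (¬ · < K), h k = 2 * p.factorial * (2/3:ℝ)^(k - K + 1) := by
        intro k hk
        simp only [Finset.mem_filter] at hk
        simp only [hh, if_neg hk.2]
      rw [Finset.sum_congr rfl heq]
      have hsub : (Finset.range n).filter (¬ · < K) ⊆ Finset.Ico K (K + n) := by
        intro k hk
        simp only [Finset.mem_filter, Finset.mem_range] at hk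
        simp only [Finset.mem_Ico]
        omega
      calc ∑ k ∈ (Finset.range n).filter (¬ · < K), 2 * (p.factorial : ℝ) * (2/3:ℝ)^(k - K + 1)
          ≤ ∑ k ∈ Finset.Ico K (K + n), 2 * (p.factorial : ℝ) * (2/3:ℝ)^(k - K + 1) := by
            apply Finset.sum_le_sum_of_subset_of_nonneg hsub
            intro k _ _; positivity
      _ = ∑ j ∈ Finset.range n, 2 * (p.factorial : ℝ) * (2/3:ℝ)^(j + 1) := by
            rw [Finset.sum_Ico_eq_sum_range]
            simp only [Nat.add_sub_cancel_left]
      _ = 2 * (p.factorial : ℝ) * (2/3) * ∑ j ∈ Finset.range n, (2/3:ℝ)^j := by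
            rw [Finset.mul_sum]
            apply Finset.sum_congr rfl
            intro j _; ring
      _ ≤ 2 * (p.factorial : ℝ) * (2/3) * 3 := by
            apply mul_le_mul_of_nonneg_left _ (by positivity)
            rw [geom_sum_eq (by norm_num : (2/3:ℝ) ≠ 1)]
            have : (0:ℝ) ≤ (2/3:ℝ)^n := by positivity
            rw [div_le_iff_of_neg (by norm_num : (2/3:ℝ) - 1 < 0)]
            linarith
      _ = 4 * p.factorial := by ring
    have hfac1 : (1:ℝ) ≤ p.factorial := by exact_mod_cast Nat.one_le_iff_ne_zero.mpr (Nat.factorial_ne_zero p)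
    linarith
  calc ∑ k ∈ Finset.range n, y k ^ p * Real.exp (-(y k)^2)
      ≤ ∑ k ∈ Finset.range n, h k := Finset.sum_le_sum (fun k _ => hpt k)
  _ ≤ 6 * p.factorial := hsum

lemma N_pos (N : ℕ → ℕ) (h1 : 1 ≤ N 0) (hd : ∀ k, 2 * N k ≤ N (k+1)) (k : ℕ) :
    2 ^ k ≤ N k := by
  have := geom_lower N hd 0 k
  simp only [Nat.zero_add] at this
  calc 2^k = 2^k * 1 := (Nat.mul_one _).symm
  _ ≤ 2^k * N 0 := Nat.mul_le_mul_left _ h1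
  _ ≤ N k := this

/-- partial-sum bound `∑_{k<n} N_k^p e^{-N_k² s} ≤ 6 p! s^{-p/2}`. -/
lemma key_sum (N : ℕ → ℕ) (h1 : 1 ≤ N 0) (hd : ∀ k, 2 * N k ≤ N (k+1))
    (p : ℕ) (hp : 1 ≤ p) (s : ℝ) (hs : 0 < s) (n : ℕ) :
    ∑ k ∈ Finset.range n, (N k : ℝ) ^ p * Real.exp (-(N k : ℝ) ^ 2 * s)
      ≤ 6 * p.factorial * s ^ (-(p:ℝ)/2) := by
  set sq : ℝ := s ^ ((1:ℝ)/2) with hsqdef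
  have hsq : 0 < sq := Real.rpow_pos_of_pos hs _
  have hsq2 : sq ^ 2 = s := by
    rw [hsqdef, ← Real.rpow_natCast (s ^ ((1:ℝ)/2)) 2, ← Real.rpow_mul hs.le]
    norm_num
  set y : ℕ → ℝ := fun k => (N k : ℝ) * sq with hydef
  have hy : ∀ k, 0 < y k := by
    intro k
    have h2 := N_pos N h1 hd k
    have h3 : 0 < (N k : ℝ) := by
      have : 0 < N k := lt_of_lt_of_le (Nat.pow_pos (by norm_num)) h2
      exact_mod_cast this
    exact mul_pos h3 hsq
  have hyd : ∀ k, 2 * y k ≤ y (k+1) := by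
    intro k
    have := hd k
    have h2 : (2:ℝ) * (N k : ℝ) ≤ (N (k+1) : ℝ) := by exact_mod_cast this
    simp only [hydef]
    nlinarith
  have hterm : ∀ k, (N k : ℝ) ^ p * Real.exp (-(N k : ℝ) ^ 2 * s)
      = (y k ^ p * Real.exp (-(y k)^2)) * s ^ (-(p:ℝ)/2) := by
    intro k
    have hsqp : sq ^ p = s ^ ((p:ℝ)/2) := by
      rw [hsqdef, ← Real.rpow_natCast (s ^ ((1:ℝ)/2)) p, ← Real.rpow_mul hs.le]
      congr 1; ring
    have hiv : s ^ ((p:ℝ)/2) * s ^ (-(p:ℝ)/2) = 1 := by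
      rw [← Real.rpow_add hs, show (p:ℝ)/2 + -(p:ℝ)/2 = 0 from by ring, Real.rpow_zero]
    have hyp : y k ^ p = (N k:ℝ)^p * s ^ ((p:ℝ)/2) := by
      rw [hydef]; simp only [mul_pow]; rw [hsqp]
    have hysq : (y k)^2 = (N k:ℝ)^2 * s := by
      rw [hydef, mul_pow, hsq2]
    calc (N k:ℝ)^p * Real.exp (-(N k:ℝ)^2 * s)
        = (N k:ℝ)^p * (s ^ ((p:ℝ)/2) * s ^ (-(p:ℝ)/2)) * Real.exp (-(N k:ℝ)^2 * s) := by
          rw [hiv, mul_one]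
    _ = ((N k:ℝ)^p * s ^ ((p:ℝ)/2) * Real.exp (-(N k:ℝ)^2 * s)) * s ^ (-(p:ℝ)/2) := by ring
    _ = (y k ^ p * Real.exp (-(y k)^2)) * s ^ (-(p:ℝ)/2) := by
          rw [hyp, hysq]; ring_nf
  calc ∑ k ∈ Finset.range n, (N k : ℝ) ^ p * Real.exp (-(N k : ℝ) ^ 2 * s)
      = ∑ k ∈ Finset.range n, (y k ^ p * Real.exp (-(y k)^2)) * s ^ (-(p:ℝ)/2) := by
        apply Finset.sum_congr rfl
        intro k _
        rw [hterm k]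
  _ = (∑ k ∈ Finset.range n, y k ^ p * Real.exp (-(y k)^2)) * s ^ (-(p:ℝ)/2) := by
        rw [Finset.sum_mul]
  _ ≤ (6 * p.factorial) * s ^ (-(p:ℝ)/2) :=
        mul_le_mul_of_nonneg_right (key_y y hy hyd p hp n) (Real.rpow_nonneg hs.le _)

lemma key_nonneg (N : ℕ → ℕ) (p : ℕ) (s : ℝ) :
    ∀ k, 0 ≤ (N k : ℝ) ^ p * Real.exp (-(N k : ℝ) ^ 2 * s) := by
  intro k; positivity

lemma key_summable (N : ℕ → ℕ) (h1 : 1 ≤ N 0) (hd : ∀ k, 2 * N k ≤ N (k+1))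
    (p : ℕ) (hp : 1 ≤ p) (s : ℝ) (hs : 0 < s) :
    Summable (fun k => (N k : ℝ) ^ p * Real.exp (-(N k : ℝ) ^ 2 * s)) :=
  summable_of_sum_range_le (key_nonneg N p s) (key_sum N h1 hd p hp s hs)

lemma key_tsum (N : ℕ → ℕ) (h1 : 1 ≤ N 0) (hd : ∀ k, 2 * N k ≤ N (k+1))
    (p : ℕ) (hp : 1 ≤ p) (s : ℝ) (hs : 0 < s) :
    ∑' k, (N k : ℝ) ^ p * Real.exp (-(N k : ℝ) ^ 2 * s) ≤ 6 * p.factorial * s ^ (-(p:ℝ)/2) :=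
  Real.tsum_le_of_sum_range_le (key_nonneg N p s) (key_sum N h1 hd p hp s hs)

/-- Part (i). -/
lemma part_i (N : ℕ → ℕ) (h1 : 1 ≤ N 0) (hd : ∀ k, 2 * N k ≤ N (k+1))
    (m : ℕ) (t : ℝ) (ht : 0 < t) :
    ∑' k : ℕ, (N k : ℝ) ^ (1 + m) * Real.exp (-(N k : ℝ) ^ 2 * t) ≤
      (6 * (1+m).factorial * 2^(m+1)) * t ^ (-((m : ℝ) + 1) / 2) *
        Real.exp (-(N 0 : ℝ) ^ 2 * t / (6 * (1+m).factorial * 2^(m+1))) := by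
  set Cm : ℝ := 6 * (1+m).factorial * 2^(m+1) with hCm
  have hCm2 : (2:ℝ) ≤ Cm := by
    rw [hCm]
    have h1f : (1:ℝ) ≤ (1+m).factorial := by exact_mod_cast Nat.one_le_iff_ne_zero.mpr (Nat.factorial_ne_zero _)
    have h2 : (2:ℝ) ≤ 2^(m+1) := by
      calc (2:ℝ) = 2^1 := (pow_one _).symm
      _ ≤ 2^(m+1) := pow_le_pow_right₀ one_le_two (by omega)
    nlinarith
  have hCmpos : 0 < Cm := by linarith
  have hN0 : ∀ k, N 0 ≤ N k := by
    intro k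
    have := geom_lower N hd 0 k
    simp only [Nat.zero_add] at this
    calc N 0 ≤ 2^k * N 0 := Nat.le_mul_of_pos_left _ (by positivity)
    _ ≤ N k := this
  -- partial-sum bound
  have hps : ∀ n, ∑ k ∈ Finset.range n, (N k : ℝ) ^ (1 + m) * Real.exp (-(N k : ℝ) ^ 2 * t)
      ≤ Cm * t ^ (-((m : ℝ) + 1) / 2) * Real.exp (-(N 0 : ℝ) ^ 2 * t / Cm) := by
    intro n
    have step1 : ∀ k, (N k : ℝ) ^ (1 + m) * Real.exp (-(N k : ℝ) ^ 2 * t)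
        ≤ ((N k : ℝ) ^ (1 + m) * Real.exp (-(N k : ℝ) ^ 2 * (t/2))) * Real.exp (-(N 0 : ℝ) ^ 2 * (t/2)) := by
      intro k
      rw [mul_assoc, ← Real.exp_add]
      apply mul_le_mul_of_nonneg_left _ (by positivity)
      apply Real.exp_le_exp.mpr
      have hle : (N 0 : ℝ) ≤ (N k : ℝ) := by exact_mod_cast hN0 k
      have h0 : (0:ℝ) ≤ (N 0 : ℝ) := by positivity
      nlinarith [mul_nonneg (by nlinarith : (0:ℝ) ≤ (N k:ℝ)^2 - (N 0:ℝ)^2) (by linarith : (0:ℝ) ≤ t/2)]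
    have step2 : ∑ k ∈ Finset.range n, (N k : ℝ) ^ (1 + m) * Real.exp (-(N k : ℝ) ^ 2 * (t/2))
        ≤ 6 * (1+m).factorial * (t/2) ^ (-((1+m : ℕ):ℝ)/2) :=
      key_sum N h1 hd (1+m) (by omega) (t/2) (by linarith) n
    have step3 : (6:ℝ) * (1+m).factorial * (t/2) ^ (-((1+m : ℕ):ℝ)/2)
        ≤ Cm * t ^ (-((m : ℝ) + 1) / 2) := by
      have hexp : -((1+m : ℕ):ℝ)/2 = -((m : ℝ) + 1) / 2 := by push_cast; ring
      rw [hexp]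
      have hdiv : (t/2) ^ (-((m : ℝ) + 1) / 2) = t ^ (-((m : ℝ) + 1) / 2) / 2 ^ (-((m : ℝ) + 1) / 2) := by
        rw [Real.div_rpow ht.le (by norm_num)]
      have h2r : (2:ℝ) ^ (-((m : ℝ) + 1) / 2) = ((2:ℝ) ^ (((m : ℝ) + 1) / 2))⁻¹ := by
        rw [show -((m:ℝ)+1)/2 = -(((m:ℝ)+1)/2) from by ring, Real.rpow_neg (by norm_num : (0:ℝ) ≤ 2)]
      have hle : (2:ℝ) ^ (((m : ℝ) + 1) / 2) ≤ 2^(m+1) := by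
        calc (2:ℝ) ^ (((m : ℝ) + 1) / 2) ≤ (2:ℝ) ^ ((m : ℝ) + 1) :=
          Real.rpow_le_rpow_of_exponent_le one_le_two (by linarith [Nat.cast_nonneg (α := ℝ) m])
        _ = 2^(m+1) := by
          rw [← Real.rpow_natCast 2 (m+1)]
          congr 1
          push_cast; ring
      have hfixdiv : t ^ (-((m : ℝ) + 1) / 2) / ((2:ℝ) ^ (((m : ℝ) + 1) / 2))⁻¹
          = t ^ (-((m : ℝ) + 1) / 2) * (2:ℝ) ^ (((m : ℝ) + 1) / 2) := by
        field_simp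
      rw [hdiv, h2r, hfixdiv, hCm]
      have htr : (0:ℝ) ≤ t ^ (-((m : ℝ) + 1) / 2) := Real.rpow_nonneg ht.le _
      have h1f : (1:ℝ) ≤ (1+m).factorial := by exact_mod_cast Nat.one_le_iff_ne_zero.mpr (Nat.factorial_ne_zero _)
      have hh : (0:ℝ) < (2:ℝ) ^ (((m : ℝ) + 1) / 2) := Real.rpow_pos_of_pos two_pos _
      calc 6 * ((1+m).factorial : ℝ) * (t ^ (-((m:ℝ)+1)/2) * (2:ℝ) ^ (((m:ℝ)+1)/2))
          ≤ 6 * ((1+m).factorial : ℝ) * (t ^ (-((m:ℝ)+1)/2) * (2:ℝ) ^ (m+1)) := by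
            apply mul_le_mul_of_nonneg_left _ (by positivity)
            exact mul_le_mul_of_nonneg_left hle htr
      _ = 6 * ((1+m).factorial : ℝ) * 2^(m+1) * t ^ (-((m:ℝ)+1)/2) := by ring
    have step4 : Real.exp (-(N 0 : ℝ) ^ 2 * (t/2)) ≤ Real.exp (-(N 0 : ℝ) ^ 2 * t / Cm) := by
      apply Real.exp_le_exp.mpr
      have h0 : (0:ℝ) ≤ (N 0 : ℝ)^2 * t := by positivity
      have hmm : (N 0:ℝ)^2 * t * Cm⁻¹ ≤ (N 0:ℝ)^2 * t * 2⁻¹ := by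
        apply mul_le_mul_of_nonneg_left _ h0
        exact inv_anti₀ two_pos hCm2
      have e2 : -(N 0:ℝ)^2 * (t/2) = -((N 0:ℝ)^2 * t * 2⁻¹) := by ring
      have e3 : -(N 0:ℝ)^2 * t / Cm = -((N 0:ℝ)^2 * t * Cm⁻¹) := by ring
      rw [e2, e3]
      exact neg_le_neg hmm
    calc ∑ k ∈ Finset.range n, (N k : ℝ) ^ (1 + m) * Real.exp (-(N k : ℝ) ^ 2 * t)
        ≤ ∑ k ∈ Finset.range n, ((N k : ℝ) ^ (1 + m) * Real.exp (-(N k : ℝ) ^ 2 * (t/2))) * Real.exp (-(N 0 : ℝ) ^ 2 * (t/2)) :=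
          Finset.sum_le_sum (fun k _ => step1 k)
    _ = (∑ k ∈ Finset.range n, (N k : ℝ) ^ (1 + m) * Real.exp (-(N k : ℝ) ^ 2 * (t/2))) * Real.exp (-(N 0 : ℝ) ^ 2 * (t/2)) := by
          rw [Finset.sum_mul]
    _ ≤ (6 * (1+m).factorial * (t/2) ^ (-((1+m : ℕ):ℝ)/2)) * Real.exp (-(N 0 : ℝ) ^ 2 * (t/2)) := by
          apply mul_le_mul_of_nonneg_right step2 (Real.exp_nonneg _)
    _ ≤ (Cm * t ^ (-((m : ℝ) + 1) / 2)) * Real.exp (-(N 0 : ℝ) ^ 2 * t / Cm) := by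
          apply mul_le_mul step3 step4 (Real.exp_nonneg _) _
          positivity
    _ = Cm * t ^ (-((m : ℝ) + 1) / 2) * Real.exp (-(N 0 : ℝ) ^ 2 * t / Cm) := by ring
  exact Real.tsum_le_of_sum_range_le (key_nonneg N (1+m) t) hps

lemma cont_rpow_half {a b : ℝ} (ha : 0 < a) (hab : a ≤ b) :
    ContinuousOn (fun t : ℝ => t ^ (-(1:ℝ)/2)) (Set.uIcc a b) := by
  intro x hx
  rw [Set.uIcc_of_le hab] at hx
  have hx0 : x ≠ 0 := ne_of_gt (lt_of_lt_of_le ha hx.1)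
  exact (Real.continuousAt_rpow_const x _ (Or.inl hx0)).continuousWithinAt

lemma cont_int (c a b : ℝ) (ha : 0 < a) (hab : a ≤ b) :
    IntervalIntegrable (fun t : ℝ => t ^ (-(1:ℝ)/2) * Real.exp (-c * t))
      MeasureTheory.volume a b := by
  apply ContinuousOn.intervalIntegrable
  exact (cont_rpow_half ha hab).mul (Continuous.continuousOn (by continuity))

lemma int_exp_neg (c a b : ℝ) (hc : 0 < c) :
    ∫ t in a..b, Real.exp (-c * t) = (Real.exp (-c*a) - Real.exp (-c*b))/c := by
  have hderiv : ∀ t ∈ Set.uIcc a b, HasDerivAt (fun u => -Real.exp (-c*u)/c) (Real.exp (-c*t)) t := by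
    intro t _
    have h1 : HasDerivAt (fun u : ℝ => -c * u) (-c) t := by
      simpa using (hasDerivAt_id t).const_mul (-c)
    have h2 : HasDerivAt (fun u : ℝ => Real.exp (-c*u)) (Real.exp (-c*t) * (-c)) t :=
      (Real.hasDerivAt_exp (-c*t)).comp t h1
    have h3 := (h2.div_const c).neg
    have hval : -(Real.exp (-c*t) * -c / c) = Real.exp (-c*t) := by
      field_simp
    rw [hval] at h3
    have hfun : (-fun x : ℝ => Real.exp (-c*x)/c) = (fun u : ℝ => -Real.exp (-c*u)/c) := by
      funext u; simp only [Pi.neg_apply]; ring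
    rw [hfun] at h3
    exact h3
  have hint : IntervalIntegrable (fun t => Real.exp (-c * t)) MeasureTheory.volume a b :=
    (Continuous.continuousOn (by continuity)).intervalIntegrable
  rw [intervalIntegral.integral_eq_sub_of_hasDerivAt hderiv hint]
  field_simp
  ring

/-- rough bound: `∫_a^b t^{-1/2} e^{-ct} ≤ 2 b^{1/2}` (c ≥ 0). -/
lemma J_le_sqrt (c a b : ℝ) (ha : 0 < a) (hab : a ≤ b) (hc : 0 ≤ c) :
    ∫ t in a..b, t ^ (-(1:ℝ)/2) * Real.exp (-c * t) ≤ 2 * b ^ ((1:ℝ)/2) := by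
  have h1 : ∫ t in a..b, t ^ (-(1:ℝ)/2) * Real.exp (-c * t) ≤ ∫ t in a..b, t ^ (-(1:ℝ)/2) := by
    apply intervalIntegral.integral_mono_on hab (cont_int c a b ha hab)
    · apply ContinuousOn.intervalIntegrable (cont_rpow_half ha hab)
    · intro x hx
      have hx0 : 0 < x := lt_of_lt_of_le ha hx.1
      have : Real.exp (-c * x) ≤ 1 := by
        rw [Real.exp_le_one_iff]
        nlinarith
      nlinarith [Real.rpow_pos_of_pos hx0 (-(1:ℝ)/2), Real.exp_pos (-c*x)]
  have h2 : ∫ t in a..b, t ^ (-(1:ℝ)/2) = (b ^ ((1:ℝ)/2) - a ^ ((1:ℝ)/2))/((1:ℝ)/2) := by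
    rw [integral_rpow (Or.inl (by norm_num))]
    norm_num
  have h3 : (0:ℝ) ≤ a ^ ((1:ℝ)/2) := Real.rpow_nonneg ha.le _
  rw [h2] at h1
  calc ∫ t in a..b, t ^ (-(1:ℝ)/2) * Real.exp (-c * t) ≤ _ := h1
  _ ≤ 2 * b ^ ((1:ℝ)/2) := by
    rw [div_le_iff₀ (by norm_num : (0:ℝ) < (1:ℝ)/2)]
    nlinarith [Real.rpow_nonneg (le_trans ha.le hab) ((1:ℝ)/2)]

/-- decay bound: `∫_a^b t^{-1/2} e^{-ct} ≤ a^{-1/2} e^{-ca}/c` (c > 0). -/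
lemma J_le_exp (c a b : ℝ) (ha : 0 < a) (hab : a ≤ b) (hc : 0 < c) :
    ∫ t in a..b, t ^ (-(1:ℝ)/2) * Real.exp (-c * t)
      ≤ a ^ (-(1:ℝ)/2) * Real.exp (-c * a) / c := by
  have h1 : ∫ t in a..b, t ^ (-(1:ℝ)/2) * Real.exp (-c * t)
      ≤ ∫ t in a..b, a ^ (-(1:ℝ)/2) * Real.exp (-c * t) := by
    apply intervalIntegral.integral_mono_on hab (cont_int c a b ha hab)
    · exact ((Continuous.continuousOn (by continuity)).intervalIntegrable)
    · intro x hx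
      have hx0 : 0 < x := lt_of_lt_of_le ha hx.1
      have hle : x ^ (-(1:ℝ)/2) ≤ a ^ (-(1:ℝ)/2) :=
        Real.rpow_le_rpow_of_nonpos ha hx.1 (by norm_num)
      exact mul_le_mul_of_nonneg_right hle (Real.exp_nonneg _)
  have h2 : ∫ t in a..b, a ^ (-(1:ℝ)/2) * Real.exp (-c * t)
      = a ^ (-(1:ℝ)/2) * ((Real.exp (-c*a) - Real.exp (-c*b))/c) := by
    rw [intervalIntegral.integral_const_mul, int_exp_neg c a b hc]
  rw [h2] at h1
  have h3 : (0:ℝ) ≤ a ^ (-(1:ℝ)/2) := Real.rpow_nonneg ha.le _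
  calc ∫ t in a..b, t ^ (-(1:ℝ)/2) * Real.exp (-c * t) ≤ _ := h1
  _ ≤ a ^ (-(1:ℝ)/2) * Real.exp (-c * a) / c := by
    rw [mul_div_assoc]
    apply mul_le_mul_of_nonneg_left _ h3
    apply div_le_div_of_nonneg_right _ hc.le
    nlinarith [Real.exp_pos (-c*b)]

lemma sq_rpow_half (x : ℝ) (hx : 0 ≤ x) : (x ^ ((1:ℝ)/2))^2 = x := by
  rw [← Real.rpow_natCast (x ^ ((1:ℝ)/2)) 2, ← Real.rpow_mul hx]
  norm_num

lemma rpow_half_inv (ν : ℝ) (hν : 0 < ν) : ((ν^2)⁻¹) ^ ((1:ℝ)/2) = ν⁻¹ := by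
  have h2 : (ν^2)⁻¹ = ν ^ (-2:ℝ) := by
    rw [Real.rpow_neg hν.le]
    congr 1
    rw [← Real.rpow_natCast ν 2]
    norm_num
  rw [h2, ← Real.rpow_mul hν.le]
  norm_num [Real.rpow_neg_one]

lemma rpow_neg_half_inv (ν : ℝ) (hν : 0 < ν) : ((ν^2)⁻¹) ^ (-(1:ℝ)/2) = ν := by
  have h2 : (ν^2)⁻¹ = ν ^ (-2:ℝ) := by
    rw [Real.rpow_neg hν.le]
    congr 1
    rw [← Real.rpow_natCast ν 2]
    norm_num
  rw [h2, ← Real.rpow_mul hν.le]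
  norm_num

/-- the middle bound: `ν ∫ t^{-1/2} e^{-ν²t} ≤ 3`. -/
lemma cJ_le_three (ν t1 t2 : ℝ) (hν : 1 ≤ ν) (ht1 : 0 < t1) (h12 : t1 ≤ t2) :
    ν * ∫ t in t1..t2, t ^ (-(1:ℝ)/2) * Real.exp (-(ν^2) * t) ≤ 3 := by
  have hν0 : 0 < ν := lt_of_lt_of_le one_pos hν
  have hν2 : 0 < ν^2 := by positivity
  set u : ℝ := (ν^2)⁻¹ with hu
  have hupos : 0 < u := by positivity
  by_cases h2u : t2 ≤ u
  · -- small times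
    have h1 := J_le_sqrt (ν^2) t1 t2 ht1 h12 hν2.le
    have h2 : t2 ^ ((1:ℝ)/2) ≤ u ^ ((1:ℝ)/2) :=
      Real.rpow_le_rpow (le_trans ht1.le h12) h2u (by norm_num)
    have h3 : u ^ ((1:ℝ)/2) = ν⁻¹ := rpow_half_inv ν hν0
    calc ν * ∫ t in t1..t2, t ^ (-(1:ℝ)/2) * Real.exp (-(ν^2) * t)
        ≤ ν * (2 * t2 ^ ((1:ℝ)/2)) := mul_le_mul_of_nonneg_left h1 hν0.le
    _ ≤ ν * (2 * ν⁻¹) := by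
        apply mul_le_mul_of_nonneg_left _ hν0.le
        rw [← h3]; linarith
    _ = 2 := by field_simp
    _ ≤ 3 := by norm_num
  · push_neg at h2u
    by_cases hu1 : u ≤ t1
    · have h1 := J_le_exp (ν^2) t1 t2 ht1 h12 hν2
      have h2 : t1 ^ (-(1:ℝ)/2) ≤ u ^ (-(1:ℝ)/2) :=
        Real.rpow_le_rpow_of_nonpos hupos hu1 (by norm_num)
      have h3 : u ^ (-(1:ℝ)/2) = ν := rpow_neg_half_inv ν hν0
      have hexple : Real.exp (-(ν^2) * t1) ≤ 1 := by
        rw [Real.exp_le_one_iff]; nlinarith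
      calc ν * ∫ t in t1..t2, t ^ (-(1:ℝ)/2) * Real.exp (-(ν^2) * t)
          ≤ ν * (t1 ^ (-(1:ℝ)/2) * Real.exp (-(ν^2) * t1) / ν^2) := mul_le_mul_of_nonneg_left h1 hν0.le
      _ ≤ ν * (ν * 1 / ν^2) := by
          apply mul_le_mul_of_nonneg_left _ hν0.le
          apply div_le_div_of_nonneg_right _ hν2.le
          calc t1 ^ (-(1:ℝ)/2) * Real.exp (-(ν^2) * t1) ≤ u ^ (-(1:ℝ)/2) * 1 :=
                mul_le_mul h2 hexple (Real.exp_nonneg _) (Real.rpow_nonneg hupos.le _)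
          _ = ν * 1 := by rw [h3]
      _ = 1 := by field_simp
      _ ≤ 3 := by norm_num
    · push_neg at hu1
      have hsplit : (∫ t in t1..u, t ^ (-(1:ℝ)/2) * Real.exp (-(ν^2) * t))
          + (∫ t in u..t2, t ^ (-(1:ℝ)/2) * Real.exp (-(ν^2) * t))
          = ∫ t in t1..t2, t ^ (-(1:ℝ)/2) * Real.exp (-(ν^2) * t) :=
        intervalIntegral.integral_add_adjacent_intervals
          (cont_int (ν^2) t1 u ht1 hu1.le) (cont_int (ν^2) u t2 hupos h2u.le)
      have h1 := J_le_sqrt (ν^2) t1 u ht1 hu1.le hν2.le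
      have h2 := J_le_exp (ν^2) u t2 hupos h2u.le hν2
      have h3 : u ^ ((1:ℝ)/2) = ν⁻¹ := rpow_half_inv ν hν0
      have h4 : u ^ (-(1:ℝ)/2) = ν := rpow_neg_half_inv ν hν0
      have hexple : Real.exp (-(ν^2) * u) ≤ 1 := by
        rw [Real.exp_le_one_iff]; nlinarith
      have h5 : ∫ t in u..t2, t ^ (-(1:ℝ)/2) * Real.exp (-(ν^2) * t) ≤ ν⁻¹ := by
        calc ∫ t in u..t2, t ^ (-(1:ℝ)/2) * Real.exp (-(ν^2) * t)
            ≤ u ^ (-(1:ℝ)/2) * Real.exp (-(ν^2) * u) / ν^2 := h2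
        _ ≤ ν * 1 / ν^2 := by
            apply div_le_div_of_nonneg_right _ hν2.le
            rw [h4]
            exact mul_le_mul_of_nonneg_left hexple hν0.le
        _ = ν⁻¹ := by field_simp
      calc ν * ∫ t in t1..t2, t ^ (-(1:ℝ)/2) * Real.exp (-(ν^2) * t)
          = ν * ((∫ t in t1..u, t ^ (-(1:ℝ)/2) * Real.exp (-(ν^2) * t))
              + (∫ t in u..t2, t ^ (-(1:ℝ)/2) * Real.exp (-(ν^2) * t))) := by rw [hsplit]
      _ ≤ ν * (2 * u ^ ((1:ℝ)/2) + ν⁻¹) := by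
          apply mul_le_mul_of_nonneg_left _ hν0.le
          exact add_le_add h1 h5
      _ = ν * (2 * ν⁻¹ + ν⁻¹) := by rw [h3]
      _ = 3 := by field_simp; ring

/-- decay bound for large frequencies. -/
lemma cJ_le_decay (ν t1 t2 : ℝ) (hν : 1 ≤ ν) (ht1 : 0 < t1) (h12 : t1 ≤ t2)
    (hlarge : 1 ≤ ν^2 * t1) :
    ν * ∫ t in t1..t2, t ^ (-(1:ℝ)/2) * Real.exp (-(ν^2) * t) ≤ Real.exp (-(ν^2) * t1) := by
  have hν0 : 0 < ν := lt_of_lt_of_le one_pos hν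
  have hν2 : 0 < ν^2 := by positivity
  have h1 := J_le_exp (ν^2) t1 t2 ht1 h12 hν2
  have hs : (t1 ^ ((1:ℝ)/2))^2 = t1 := sq_rpow_half t1 ht1.le
  have hspos : 0 < t1 ^ ((1:ℝ)/2) := Real.rpow_pos_of_pos ht1 _
  have hx2 : 1 ≤ (ν * t1 ^ ((1:ℝ)/2))^2 := by rw [mul_pow, hs]; exact hlarge
  have hkey : 1 ≤ ν * t1 ^ ((1:ℝ)/2) := by nlinarith [hx2, mul_pos hν0 hspos]
  have hneg : t1 ^ (-(1:ℝ)/2) = (t1 ^ ((1:ℝ)/2))⁻¹ := by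
    rw [show -(1:ℝ)/2 = -((1:ℝ)/2) from by ring, Real.rpow_neg ht1.le]
  calc ν * ∫ t in t1..t2, t ^ (-(1:ℝ)/2) * Real.exp (-(ν^2) * t)
      ≤ ν * (t1 ^ (-(1:ℝ)/2) * Real.exp (-(ν^2) * t1) / ν^2) := mul_le_mul_of_nonneg_left h1 hν0.le
  _ = Real.exp (-(ν^2) * t1) * (ν * t1 ^ ((1:ℝ)/2))⁻¹ := by
      rw [hneg]
      field_simp
  _ ≤ Real.exp (-(ν^2) * t1) * 1 := by
      apply mul_le_mul_of_nonneg_left _ (Real.exp_nonneg _)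
      rw [inv_le_one_iff₀]
      right; exact hkey
  _ = Real.exp (-(ν^2) * t1) := mul_one _

lemma N_one_le (N : ℕ → ℕ) (h1 : 1 ≤ N 0) (hd : ∀ k, 2 * N k ≤ N (k+1)) (k : ℕ) :
    (1:ℝ) ≤ (N k : ℝ) := by
  have h := N_pos N h1 hd k
  have : 1 ≤ N k := le_trans (Nat.one_le_two_pow) h
  exact_mod_cast this

/-- the main counting bound on partial sums of `c_k`. -/
lemma count_sum (N : ℕ → ℕ) (h1 : 1 ≤ N 0) (hd : ∀ k, 2 * N k ≤ N (k+1))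
    (t1 t2 : ℝ) (ht1 : 0 < t1) (h12 : t1 ≤ t2) (K L : ℕ)
    (hKmin : ∀ k, k < K → (N k : ℝ) * t2 ^ ((1:ℝ)/2) ≤ 1)
    (hL : 1 ≤ (N L : ℝ)^2 * t1)
    (n : ℕ) :
    ∑ k ∈ Finset.range n,
        (N k : ℝ) * ∫ t in t1..t2, t ^ (-(1:ℝ)/2) * Real.exp (-((N k:ℝ)^2) * t)
      ≤ 5 + 3 * ((L - K : ℕ) : ℝ) := by
  classical
  have ht2 : 0 < t2 := lt_of_lt_of_le ht1 h12
  have hsq2 : 0 < t2 ^ ((1:ℝ)/2) := Real.rpow_pos_of_pos ht2 _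
  set c : ℕ → ℝ := fun k =>
    (N k : ℝ) * ∫ t in t1..t2, t ^ (-(1:ℝ)/2) * Real.exp (-((N k:ℝ)^2) * t) with hc
  set h : ℕ → ℝ := fun k =>
    if k < K then (2:ℝ)^(k+2)/2^K else if k < L then 3 else (1/2:ℝ)^(k-L+1) with hh
  have hpt : ∀ k, c k ≤ h k := by
    intro k
    have hNk : (1:ℝ) ≤ (N k : ℝ) := N_one_le N h1 hd k
    by_cases hkK : k < K
    · -- small: c k ≤ 2 N_k t2^{1/2} ≤ 2^{k+2}/2^K
      have hb : c k ≤ 2 * (N k : ℝ) * t2 ^ ((1:ℝ)/2) := by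
        have := J_le_sqrt ((N k:ℝ)^2) t1 t2 ht1 h12 (by positivity)
        calc c k ≤ (N k : ℝ) * (2 * t2 ^ ((1:ℝ)/2)) :=
              mul_le_mul_of_nonneg_left this (by linarith)
        _ = 2 * (N k : ℝ) * t2 ^ ((1:ℝ)/2) := by ring
      -- N_k t2^{1/2} ≤ 2^{k+1}/2^K
      have hgl := geom_lower N hd k (K-1-k)
      have hke : k + (K-1-k) = K-1 := by omega
      rw [hke] at hgl
      have hglR : (2:ℝ)^(K-1-k) * (N k : ℝ) ≤ (N (K-1) : ℝ) := by exact_mod_cast hgl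
      have hsm : (N (K-1) : ℝ) * t2 ^ ((1:ℝ)/2) ≤ 1 := hKmin (K-1) (by omega)
      have hdbl : (N k : ℝ) * t2 ^ ((1:ℝ)/2) ≤ 1 / 2^(K-1-k) := by
        rw [le_div_iff₀ (by positivity)]
        calc (N k:ℝ) * t2 ^ ((1:ℝ)/2) * 2^(K-1-k)
            = ((2:ℝ)^(K-1-k) * (N k:ℝ)) * t2 ^ ((1:ℝ)/2) := by ring
        _ ≤ (N (K-1) : ℝ) * t2 ^ ((1:ℝ)/2) := mul_le_mul_of_nonneg_right hglR hsq2.le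
        _ ≤ 1 := hsm
      have hKeq : (2:ℝ) ^ K = 2 ^ (k+1) * 2 ^ (K-1-k) := by
        rw [← pow_add]; congr 1; omega
      have hfin : 2 * ((N k : ℝ) * t2 ^ ((1:ℝ)/2)) ≤ (2:ℝ)^(k+2)/2^K := by
        rw [hKeq]
        have e1 : (2:ℝ)^(k+2) / ((2:ℝ)^(k+1) * 2 ^ (K-1-k)) = 2 / 2^(K-1-k) := by
          rw [pow_succ, pow_succ]
          field_simp
        rw [e1]
        rw [div_eq_mul_one_div (2:ℝ) ((2:ℝ)^(K-1-k))]
        nlinarith [hdbl]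
      simp only [hh, if_pos hkK]
      calc c k ≤ 2 * (N k : ℝ) * t2 ^ ((1:ℝ)/2) := hb
      _ = 2 * ((N k : ℝ) * t2 ^ ((1:ℝ)/2)) := by ring
      _ ≤ (2:ℝ)^(k+2)/2^K := hfin
    · by_cases hkL : k < L
      · simp only [hh, if_neg hkK, if_pos hkL]
        exact cJ_le_three (N k : ℝ) t1 t2 hNk ht1 h12
      · -- large: decay
        push_neg at hkL
        have hgl := geom_lower N hd L (k-L)
        have hke : L + (k-L) = k := by omega
        rw [hke] at hgl
        have hglR : (2:ℝ)^(k-L) * (N L : ℝ) ≤ (N k : ℝ) := by exact_mod_cast hgl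
        have hNL : (1:ℝ) ≤ (N L : ℝ) := N_one_le N h1 hd L
        have hlarge : (4:ℝ)^(k-L) ≤ (N k:ℝ)^2 * t1 := by
          have hsq : ((2:ℝ)^(k-L) * (N L : ℝ))^2 ≤ (N k : ℝ)^2 := by
            apply pow_le_pow_left₀ (by positivity) hglR
          have he : ((2:ℝ)^(k-L) * (N L : ℝ))^2 = (4:ℝ)^(k-L) * (N L:ℝ)^2 := by
            rw [mul_pow, ← pow_mul, Nat.mul_comm, pow_mul]
            norm_num
          nlinarith [pow_pos (by norm_num : (0:ℝ) < 4) (k-L), mul_pos (pow_pos (by norm_num : (0:ℝ) < 4) (k-L)) ht1]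
        have h1large : 1 ≤ (N k:ℝ)^2 * t1 := by
          have : (1:ℝ) ≤ (4:ℝ)^(k-L) := one_le_pow₀ (by norm_num)
          linarith
        have hdec := cJ_le_decay (N k : ℝ) t1 t2 hNk ht1 h12 h1large
        have hexp : Real.exp (-((N k:ℝ)^2) * t1) ≤ (1/2:ℝ)^(k-L+1) := by
          have e1 : Real.exp (-((N k:ℝ)^2) * t1) ≤ Real.exp (-(4:ℝ)^(k-L)) := by
            apply Real.exp_le_exp.mpr; linarith
          have e2 : Real.exp (-(4:ℝ)^(k-L)) = Real.exp (-1) ^ (4^(k-L) : ℕ) := by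
            rw [← Real.exp_nat_mul]
            congr 1
            push_cast
            ring
          have e3 : Real.exp (-1:ℝ) ≤ 1/2 := by
            have h2e : (2:ℝ) ≤ Real.exp 1 := by
              have := Real.add_one_le_exp (1:ℝ); linarith
            rw [Real.exp_neg, inv_le_comm₀ (Real.exp_pos _) (by norm_num)]
            linarith
          have e4 : Real.exp (-1:ℝ) ^ (4^(k-L) : ℕ) ≤ (1/2:ℝ) ^ (4^(k-L) : ℕ) :=
            pow_le_pow_left₀ (Real.exp_nonneg _) e3 _
          have e5 : (1/2:ℝ) ^ (4^(k-L) : ℕ) ≤ (1/2:ℝ)^(k-L+1) := by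
            apply pow_le_pow_of_le_one (by norm_num) (by norm_num)
            exact Nat.succ_le_of_lt (Nat.lt_pow_self (a := 4) (by norm_num))
          calc Real.exp (-((N k:ℝ)^2) * t1) ≤ _ := e1
          _ = _ := e2
          _ ≤ _ := e4
          _ ≤ _ := e5
        simp only [hh, if_neg hkK, if_neg (not_lt.mpr hkL)]
        exact le_trans hdec hexp
  -- sum the dominating function
  have hsum : ∑ k ∈ Finset.range n, h k ≤ 5 + 3 * ((L - K : ℕ) : ℝ) := by
    rw [← Finset.sum_filter_add_sum_filter_not (Finset.range n) (· < K)]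
    have part1 : ∑ k ∈ (Finset.range n).filter (· < K), h k ≤ 4 := by
      have heq : ∀ k ∈ (Finset.range n).filter (· < K), h k = (2:ℝ)^(k+2)/2^K := by
        intro k hk
        simp only [Finset.mem_filter] at hk
        simp only [hh, if_pos hk.2]
      rw [Finset.sum_congr rfl heq]
      have hsub : (Finset.range n).filter (· < K) ⊆ Finset.range K := by
        intro k hk
        simp only [Finset.mem_filter, Finset.mem_range] at hk ⊢
        exact hk.2
      calc ∑ k ∈ (Finset.range n).filter (· < K), (2:ℝ)^(k+2)/2^K
          ≤ ∑ k ∈ Finset.range K, (2:ℝ)^(k+2)/2^K := by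
            apply Finset.sum_le_sum_of_subset_of_nonneg hsub
            intro k _ _; positivity
      _ = (∑ k ∈ Finset.range K, (2:ℝ)^(k+2)) / 2^K := by rw [Finset.sum_div]
      _ ≤ (4 * 2^K) / 2^K := by
            apply div_le_div_of_nonneg_right _ (by positivity)
            have heq2 : ∑ k ∈ Finset.range K, (2:ℝ)^(k+2) = 4 * ∑ k ∈ Finset.range K, (2:ℝ)^k := by
              rw [Finset.mul_sum]; apply Finset.sum_congr rfl; intro k _; ring
            rw [heq2, geom_sum_eq (by norm_num : (2:ℝ) ≠ 1)]
            nlinarith [pow_pos (two_pos (α := ℝ)) K]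
      _ = 4 := by field_simp
    rw [← Finset.sum_filter_add_sum_filter_not ((Finset.range n).filter (¬ · < K)) (· < L)]
    have part2 : ∑ k ∈ ((Finset.range n).filter (¬ · < K)).filter (· < L), h k
        ≤ 3 * ((L - K : ℕ) : ℝ) := by
      have heq : ∀ k ∈ ((Finset.range n).filter (¬ · < K)).filter (· < L), h k = 3 := by
        intro k hk
        simp only [Finset.mem_filter] at hk
        simp only [hh, if_neg hk.1.2, if_pos hk.2]
      rw [Finset.sum_congr rfl heq, Finset.sum_const]
      have hcard : ((Finset.range n).filter (¬ · < K)).filter (· < L) ⊆ Finset.Ico K L := by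
        intro k hk
        simp only [Finset.mem_filter, Finset.mem_range] at hk
        simp only [Finset.mem_Ico]
        omega
      have := Finset.card_le_card hcard
      rw [Nat.card_Ico] at this
      have : (((Finset.range n).filter (¬ · < K)).filter (· < L)).card ≤ ((L - K : ℕ) : ℝ) := by
        exact_mod_cast this
      simp only [nsmul_eq_mul]
      nlinarith [this]
    have part3 : ∑ k ∈ ((Finset.range n).filter (¬ · < K)).filter (¬ · < L), h k ≤ 1 := by
      have heq : ∀ k ∈ ((Finset.range n).filter (¬ · < K)).filter (¬ · < L), h k = (1/2:ℝ)^(k-L+1) := by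
        intro k hk
        simp only [Finset.mem_filter] at hk
        simp only [hh, if_neg hk.1.2, if_neg hk.2]
      rw [Finset.sum_congr rfl heq]
      have hsub : ((Finset.range n).filter (¬ · < K)).filter (¬ · < L) ⊆ Finset.Ico L (L + n) := by
        intro k hk
        simp only [Finset.mem_filter, Finset.mem_range] at hk
        simp only [Finset.mem_Ico]
        omega
      calc ∑ k ∈ ((Finset.range n).filter (¬ · < K)).filter (¬ · < L), (1/2:ℝ)^(k-L+1)
          ≤ ∑ k ∈ Finset.Ico L (L + n), (1/2:ℝ)^(k-L+1) := by
            apply Finset.sum_le_sum_of_subset_of_nonneg hsub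
            intro k _ _; positivity
      _ = ∑ j ∈ Finset.range n, (1/2:ℝ)^(j+1) := by
            rw [Finset.sum_Ico_eq_sum_range]
            simp only [Nat.add_sub_cancel_left]
      _ = (1/2) * ∑ j ∈ Finset.range n, (1/2:ℝ)^j := by
            rw [Finset.mul_sum]
            apply Finset.sum_congr rfl
            intro j _; ring
      _ ≤ (1/2) * 2 := by
            apply mul_le_mul_of_nonneg_left _ (by norm_num)
            rw [geom_sum_eq (by norm_num : (1/2:ℝ) ≠ 1)]
            have : (0:ℝ) ≤ (1/2:ℝ)^n := by positivity
            rw [div_le_iff_of_neg (by norm_num : (1/2:ℝ) - 1 < 0)]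
            linarith
      _ = 1 := by norm_num
    linarith
  calc ∑ k ∈ Finset.range n, c k ≤ ∑ k ∈ Finset.range n, h k :=
        Finset.sum_le_sum (fun k _ => hpt k)
  _ ≤ 5 + 3 * ((L - K : ℕ) : ℝ) := hsum

/-- count of middle indices. -/
lemma count_le (N : ℕ → ℕ) (h1 : 1 ≤ N 0) (hd : ∀ k, 2 * N k ≤ N (k+1))
    (A : ℝ) (hA : 2 ≤ A) (hgrow : ∀ k, A * (N k : ℝ) ≤ (N (k+1) : ℝ))
    (t1 t2 : ℝ) (ht1 : 0 < t1) (h12 : t1 ≤ t2) (K L : ℕ)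
    (hK : 1 < (N K : ℝ) * t2 ^ ((1:ℝ)/2))
    (hLmin : ∀ k, k < L → (N k : ℝ)^2 * t1 < 1) :
    ((L - K : ℕ) : ℝ) ≤ 1 + (Real.log A)⁻¹ * Real.log (t2/t1) := by
  have ht2 : 0 < t2 := lt_of_lt_of_le ht1 h12
  have hlogA : 0 < Real.log A := Real.log_pos (by linarith)
  have hlogt : 0 ≤ Real.log (t2/t1) := Real.log_nonneg ((one_le_div ht1).mpr h12)
  by_cases hKL : L ≤ K
  · have : L - K = 0 := by omega
    rw [this]
    simp only [Nat.cast_zero]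
    positivity
  · push_neg at hKL
    -- K < L
    set j := L - 1 - K with hj
    have hLj : L - K = j + 1 := by omega
    have hchain := ratio_lower N A (by linarith) hgrow K j
    have hke : K + j = L - 1 := by omega
    rw [hke] at hchain
    have hsq1 : 0 < t1 ^ ((1:ℝ)/2) := Real.rpow_pos_of_pos ht1 _
    have hsq2 : 0 < t2 ^ ((1:ℝ)/2) := Real.rpow_pos_of_pos ht2 _
    have hNL1 : (N (L-1) : ℝ) * t1 ^ ((1:ℝ)/2) < 1 := by
      have hL1 := hLmin (L-1) (by omega)
      have hNpos : (1:ℝ) ≤ (N (L-1) : ℝ) := N_one_le N h1 hd (L-1)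
      have hs : (t1 ^ ((1:ℝ)/2))^2 = t1 := by
        rw [← Real.rpow_natCast (t1 ^ ((1:ℝ)/2)) 2, ← Real.rpow_mul ht1.le]
        norm_num
      nlinarith [mul_pos (lt_of_lt_of_le one_pos hNpos) hsq1, hL1]
    -- A^j < (t2/t1)^{1/2}
    have hstep : (A:ℝ)^j < t2 ^ ((1:ℝ)/2) / t1 ^ ((1:ℝ)/2) := by
      have h2 : (A:ℝ)^j ≤ (A:ℝ)^j * ((N K : ℝ) * t2 ^ ((1:ℝ)/2)) := by
        nlinarith [pow_pos (by linarith : (0:ℝ) < A) j, hK]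
      have h3 : (A:ℝ)^j * ((N K : ℝ) * t2 ^ ((1:ℝ)/2)) ≤ (N (L-1) : ℝ) * t2 ^ ((1:ℝ)/2) := by
        have : (A:ℝ)^j * (N K : ℝ) ≤ (N (L-1) : ℝ) := hchain
        nlinarith [hsq2]
      have h4 : (N (L-1) : ℝ) * t2 ^ ((1:ℝ)/2) < t2 ^ ((1:ℝ)/2) / t1 ^ ((1:ℝ)/2) := by
        rw [lt_div_iff₀ hsq1]
        calc (N (L-1):ℝ) * t2 ^ ((1:ℝ)/2) * t1 ^ ((1:ℝ)/2)
            = ((N (L-1):ℝ) * t1 ^ ((1:ℝ)/2)) * t2 ^ ((1:ℝ)/2) := by ring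
        _ < 1 * t2 ^ ((1:ℝ)/2) := mul_lt_mul_of_pos_right hNL1 hsq2
        _ = t2 ^ ((1:ℝ)/2) := one_mul _
      calc (A:ℝ)^j ≤ _ := h2
      _ ≤ _ := h3
      _ < _ := h4
    have hrw : t2 ^ ((1:ℝ)/2) / t1 ^ ((1:ℝ)/2) = (t2/t1) ^ ((1:ℝ)/2) := by
      rw [Real.div_rpow ht2.le ht1.le]
    rw [hrw] at hstep
    have hlog : (j:ℝ) * Real.log A ≤ (1/2) * Real.log (t2/t1) := by
      have hpowpos : (0:ℝ) < (A:ℝ)^j := pow_pos (by linarith) j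
      have := Real.log_le_log hpowpos hstep.le
      rw [Real.log_pow, Real.log_rpow (by positivity)] at this
      calc (j:ℝ) * Real.log A ≤ _ := this
      _ = (1/2) * Real.log (t2/t1) := by ring
    have hjle : (j:ℝ) ≤ (Real.log A)⁻¹ * Real.log (t2/t1) := by
      rw [← mul_le_mul_iff_of_pos_right hlogA]
      calc (j:ℝ) * Real.log A ≤ (1/2) * Real.log (t2/t1) := hlog
      _ ≤ Real.log (t2/t1) := by linarith
      _ = (Real.log A)⁻¹ * Real.log (t2/t1) * Real.log A := by
          field_simp
    rw [hLj]
    push_cast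
    linarith

set_option maxHeartbeats 2000000 in
lemma part_ii (N : ℕ → ℕ) (h1 : 1 ≤ N 0) (hd : ∀ k, 2 * N k ≤ N (k+1))
    (A : ℝ) (hA : 2 ≤ A) (hgrow : ∀ k, A * (N k : ℝ) ≤ (N (k+1) : ℝ))
    (t1 t2 : ℝ) (ht1 : 0 < t1) (h12 : t1 ≤ t2) (ht2 : t2 ≤ 1) :
    (∫ t in t1..t2, (∑' k : ℕ, (N k : ℝ) * Real.exp (-(N k : ℝ) ^ 2 * t)) ^ 2) +
      (∫ t in t1..t2, t ^ (-(1:ℝ) / 2) * ∑' k : ℕ, (N k : ℝ) * Real.exp (-(N k : ℝ) ^ 2 * t)) ≤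
      100 * (1 + (Real.log A)⁻¹ * Real.log (t2 / t1)) := by
  classical
  have ht2pos : 0 < t2 := lt_of_lt_of_le ht1 h12
  have hlogA : 0 < Real.log A := Real.log_pos (by linarith)
  have hlogt : 0 ≤ Real.log (t2/t1) := Real.log_nonneg ((one_le_div ht1).mpr h12)
  set x : ℝ := (Real.log A)⁻¹ * Real.log (t2/t1) with hx
  have hx0 : 0 ≤ x := by positivity
  set f : ℕ → ℝ → ℝ := fun k t => (N k : ℝ) * Real.exp (-(N k : ℝ) ^ 2 * t) with hf
  set S : ℝ → ℝ := fun t => ∑' k : ℕ, f k t with hS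
  set u : ℕ → ℝ := fun k => (N k : ℝ) * Real.exp (-(N k : ℝ) ^ 2 * t1) with hu
  -- summability
  have hsumm : ∀ t : ℝ, 0 < t → Summable (fun k => f k t) := by
    intro t ht
    have := key_summable N h1 hd 1 le_rfl t ht
    simpa [hf, pow_one] using this
  have hu_sum : Summable u := by
    have := hsumm t1 ht1
    simpa [hf, hu] using this
  have hf_cont : ∀ k, Continuous (fun t : ℝ => f k t) := by
    intro k
    simp only [hf]
    exact continuous_const.mul (Real.continuous_exp.comp (continuous_const.mul continuous_id))
  -- pointwise facts
  have hf_nonneg : ∀ k t, 0 ≤ f k t := by intro k t; simp only [hf]; positivity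
  have hS_nonneg : ∀ t, 0 ≤ S t := fun t => tsum_nonneg (fun k => hf_nonneg k t)
  have hf_mono : ∀ k, ∀ t ∈ Set.Icc t1 t2, f k t ≤ u k := by
    intro k t ht
    simp only [hf, hu]
    apply mul_le_mul_of_nonneg_left _ (by positivity)
    apply Real.exp_le_exp.mpr
    nlinarith [ht.1, sq_nonneg (N k : ℝ)]
  have hS_le : ∀ t ∈ Set.Icc t1 t2, S t ≤ 6 * t ^ (-(1:ℝ)/2) := by
    intro t ht
    have htpos : 0 < t := lt_of_lt_of_le ht1 ht.1
    have := key_tsum N h1 hd 1 le_rfl t htpos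
    simp only [Nat.factorial_one, Nat.cast_one, pow_one, Nat.cast_ofNat] at this
    calc S t = ∑' k, (N k : ℝ) ^ 1 * Real.exp (-(N k : ℝ) ^ 2 * t) := by
          simp only [hS, hf, pow_one]
    _ ≤ 6 * 1 * t ^ (-(1:ℝ)/2) := by
          have h := key_tsum N h1 hd 1 le_rfl t htpos
          simpa using h
    _ = 6 * t ^ (-(1:ℝ)/2) := by ring
  -- continuity of S on [t1, t2]
  have hS_cont : ContinuousOn S (Set.Icc t1 t2) := by
    apply continuousOn_tsum (u := u)
    · intro k
      exact (hf_cont k).continuousOn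
    · exact hu_sum
    · intro k t ht
      rw [Real.norm_eq_abs, abs_of_nonneg (hf_nonneg k t)]
      exact hf_mono k t ht
  have hIcc : Set.uIcc t1 t2 = Set.Icc t1 t2 := Set.uIcc_of_le h12
  -- integrability
  have hI_S : IntervalIntegrable S MeasureTheory.volume t1 t2 := by
    apply ContinuousOn.intervalIntegrable
    rwa [hIcc]
  have hI_r : IntervalIntegrable (fun t : ℝ => t ^ (-(1:ℝ)/2)) MeasureTheory.volume t1 t2 :=
    (cont_rpow_half ht1 h12).intervalIntegrable
  have hS_contu : ContinuousOn S (Set.uIcc t1 t2) := by rwa [hIcc]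
  have hI_S2 : IntervalIntegrable (fun t => S t ^ 2) MeasureTheory.volume t1 t2 :=
    (hS_contu.pow 2).intervalIntegrable
  have hI_rS : IntervalIntegrable (fun t => t ^ (-(1:ℝ)/2) * S t) MeasureTheory.volume t1 t2 :=
    ((cont_rpow_half ht1 h12).mul hS_contu).intervalIntegrable
  have hI_6rS : IntervalIntegrable (fun t => 6 * t ^ (-(1:ℝ)/2) * S t) MeasureTheory.volume t1 t2 := by
    have : (fun t : ℝ => 6 * t ^ (-(1:ℝ)/2) * S t) = fun t => 6 * (t ^ (-(1:ℝ)/2) * S t) := by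
      funext t; ring
    rw [this]
    exact hI_rS.const_mul 6
  -- step 1: ∫ S² ≤ 6 ∫ t^{-1/2} S
  have hsq : (∫ t in t1..t2, S t ^ 2) ≤ 6 * ∫ t in t1..t2, t ^ (-(1:ℝ)/2) * S t := by
    have h1' : (∫ t in t1..t2, S t ^ 2) ≤ ∫ t in t1..t2, 6 * t ^ (-(1:ℝ)/2) * S t := by
      apply intervalIntegral.integral_mono_on h12 hI_S2 hI_6rS
      intro t ht
      have := hS_le t ht
      have h0 := hS_nonneg t
      calc S t ^ 2 = S t * S t := sq (S t)
      _ ≤ (6 * t ^ (-(1:ℝ)/2)) * S t := mul_le_mul_of_nonneg_right this h0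
      _ = 6 * t ^ (-(1:ℝ)/2) * S t := by ring
    calc (∫ t in t1..t2, S t ^ 2) ≤ _ := h1'
    _ = 6 * ∫ t in t1..t2, t ^ (-(1:ℝ)/2) * S t := by
        rw [← intervalIntegral.integral_const_mul]
        apply intervalIntegral.integral_congr
        intro t _
        ring
  -- the thresholds K and L
  have hexK : ∃ k, 1 < (N k : ℝ) * t2 ^ ((1:ℝ)/2) := by
    have hsq2 : 0 < t2 ^ ((1:ℝ)/2) := Real.rpow_pos_of_pos ht2pos _
    obtain ⟨i, hi⟩ := pow_unbounded_of_one_lt ((t2 ^ ((1:ℝ)/2))⁻¹) (one_lt_two (α := ℝ))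
    refine ⟨i, ?_⟩
    have hN : (2:ℝ)^i ≤ (N i : ℝ) := by exact_mod_cast N_pos N h1 hd i
    have : (t2 ^ ((1:ℝ)/2))⁻¹ < (N i : ℝ) := lt_of_lt_of_le hi hN
    calc (1:ℝ) = (t2 ^ ((1:ℝ)/2))⁻¹ * t2 ^ ((1:ℝ)/2) := by rw [inv_mul_cancel₀ hsq2.ne']
    _ < (N i : ℝ) * t2 ^ ((1:ℝ)/2) := mul_lt_mul_of_pos_right this hsq2
  have hexL : ∃ k, 1 ≤ (N k : ℝ)^2 * t1 := by
    obtain ⟨i, hi⟩ := pow_unbounded_of_one_lt (t1⁻¹) (one_lt_two (α := ℝ))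
    refine ⟨i, ?_⟩
    have hN : (2:ℝ)^i ≤ (N i : ℝ) := by exact_mod_cast N_pos N h1 hd i
    have h2 : t1⁻¹ < (N i : ℝ)^2 := by
      calc t1⁻¹ < (2:ℝ)^i := hi
      _ ≤ (N i : ℝ) := hN
      _ ≤ (N i : ℝ)^2 := by nlinarith [N_one_le N h1 hd i]
    have := mul_lt_mul_of_pos_right h2 ht1
    rw [inv_mul_cancel₀ ht1.ne'] at this
    linarith
  set K := Nat.find hexK with hKdef
  set L := Nat.find hexL with hLdef
  have hK : 1 < (N K : ℝ) * t2 ^ ((1:ℝ)/2) := Nat.find_spec hexK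
  have hKmin : ∀ k, k < K → (N k : ℝ) * t2 ^ ((1:ℝ)/2) ≤ 1 :=
    fun k hk => not_lt.mp (Nat.find_min hexK hk)
  have hL : 1 ≤ (N L : ℝ)^2 * t1 := Nat.find_spec hexL
  have hLmin : ∀ k, k < L → (N k : ℝ)^2 * t1 < 1 :=
    fun k hk => not_le.mp (Nat.find_min hexL hk)
  set B : ℝ := 5 + 3 * ((L - K : ℕ) : ℝ) with hB
  have hcount : ((L - K : ℕ) : ℝ) ≤ 1 + x :=
    count_le N h1 hd A hA hgrow t1 t2 ht1 h12 K L hK hLmin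
  -- the tail quantities
  set T : ℝ := ∑' k, u k with hT
  set P : ℕ → ℝ := fun n => ∑ k ∈ Finset.range n, u k with hP
  have hTP : ∀ n, 0 ≤ T - P n := by
    intro n
    have := Summable.sum_add_tsum_nat_add' (f := u) (k := n) ((summable_nat_add_iff n).mpr hu_sum)
    have htail : 0 ≤ ∑' k, u (k + n) := tsum_nonneg (fun k => by simp only [hu]; positivity)
    simp only [hP, hT]
    linarith [this]
  -- bound on I for each n
  have hIbound : ∀ n, (∫ t in t1..t2, t ^ (-(1:ℝ)/2) * S t) ≤ B + (T - P n) * 2 := by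
    intro n
    -- pointwise bound on S
    have hpt : ∀ t ∈ Set.Icc t1 t2, S t ≤ (∑ k ∈ Finset.range n, f k t) + (T - P n) := by
      intro t ht
      have htpos : 0 < t := lt_of_lt_of_le ht1 ht.1
      have hsplit := Summable.sum_add_tsum_nat_add' (f := fun k => f k t) (k := n) ((summable_nat_add_iff n).mpr (hsumm t htpos))
      have htail : (∑' k, f (k + n) t) ≤ ∑' k, u (k + n) := by
        apply Summable.tsum_le_tsum
        · intro k; exact hf_mono (k + n) t ht
        · exact (summable_nat_add_iff n).mpr (hsumm t htpos)
        · exact (summable_nat_add_iff n).mpr hu_sum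
      have hsplitu := Summable.sum_add_tsum_nat_add' (f := u) (k := n) ((summable_nat_add_iff n).mpr hu_sum)
      simp only [hS, hP, hT]
      have e1 : (∑' (k : ℕ), f k t) = (∑ k ∈ Finset.range n, f k t) + ∑' (k : ℕ), f (k + n) t :=
        hsplit.symm
      rw [e1]
      have e2 : (∑' (k : ℕ), u (k + n)) = (∑' (k : ℕ), u k) - ∑ k ∈ Finset.range n, u k := by
        linarith [hsplitu]
      rw [← e2]
      exact add_le_add_right htail _
    -- now integrate
    have hGcont : ContinuousOn (fun t => (∑ k ∈ Finset.range n, f k t) + (T - P n)) (Set.uIcc t1 t2) := by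
      apply ContinuousOn.add _ continuousOn_const
      apply continuousOn_finset_sum
      intro k _
      exact (hf_cont k).continuousOn
    have hI_G : IntervalIntegrable (fun t => t ^ (-(1:ℝ)/2) * ((∑ k ∈ Finset.range n, f k t) + (T - P n))) MeasureTheory.volume t1 t2 :=
      ((cont_rpow_half ht1 h12).mul hGcont).intervalIntegrable
    have hmono : (∫ t in t1..t2, t ^ (-(1:ℝ)/2) * S t)
        ≤ ∫ t in t1..t2, t ^ (-(1:ℝ)/2) * ((∑ k ∈ Finset.range n, f k t) + (T - P n)) := by
      apply intervalIntegral.integral_mono_on h12 hI_rS hI_G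
      intro t ht
      have htpos : 0 < t := lt_of_lt_of_le ht1 ht.1
      exact mul_le_mul_of_nonneg_left (hpt t ht) (Real.rpow_nonneg htpos.le _)
    -- split the RHS integral
    have hI_rsum : IntervalIntegrable (fun t => t ^ (-(1:ℝ)/2) * (∑ k ∈ Finset.range n, f k t)) MeasureTheory.volume t1 t2 := by
      apply ContinuousOn.intervalIntegrable
      apply ContinuousOn.mul (cont_rpow_half ht1 h12)
      apply continuousOn_finset_sum
      intro k _
      exact (hf_cont k).continuousOn
    have hI_rc : IntervalIntegrable (fun t : ℝ => t ^ (-(1:ℝ)/2) * (T - P n)) MeasureTheory.volume t1 t2 := by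
      have : (fun t : ℝ => t ^ (-(1:ℝ)/2) * (T - P n)) = fun t : ℝ => (T - P n) * t ^ (-(1:ℝ)/2) := by
        funext t; ring
      rw [this]
      exact hI_r.const_mul _
    have hsplit2 : (∫ t in t1..t2, t ^ (-(1:ℝ)/2) * ((∑ k ∈ Finset.range n, f k t) + (T - P n)))
        = (∫ t in t1..t2, t ^ (-(1:ℝ)/2) * (∑ k ∈ Finset.range n, f k t))
          + ∫ t in t1..t2, t ^ (-(1:ℝ)/2) * (T - P n) := by
      rw [← intervalIntegral.integral_add hI_rsum hI_rc]
      apply intervalIntegral.integral_congr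
      intro t _
      ring
    -- the finite sum part equals ∑ c_k
    have hfin : (∫ t in t1..t2, t ^ (-(1:ℝ)/2) * (∑ k ∈ Finset.range n, f k t))
        = ∑ k ∈ Finset.range n, (N k : ℝ) * ∫ t in t1..t2, t ^ (-(1:ℝ)/2) * Real.exp (-((N k:ℝ)^2) * t) := by
      have e1 : (∫ t in t1..t2, t ^ (-(1:ℝ)/2) * (∑ k ∈ Finset.range n, f k t))
          = ∫ t in t1..t2, ∑ k ∈ Finset.range n, (N k : ℝ) * (t ^ (-(1:ℝ)/2) * Real.exp (-((N k:ℝ)^2) * t)) := by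
        apply intervalIntegral.integral_congr
        intro t _
        simp only [hf]
        rw [Finset.mul_sum]
        apply Finset.sum_congr rfl
        intro k _
        ring
      rw [e1]
      rw [intervalIntegral.integral_finset_sum]
      · apply Finset.sum_congr rfl
        intro k _
        rw [intervalIntegral.integral_const_mul]
      · intro k _
        exact (cont_int ((N k:ℝ)^2) t1 t2 ht1 h12).const_mul _
    -- the constant part
    have hconst : (∫ t in t1..t2, t ^ (-(1:ℝ)/2) * (T - P n)) ≤ (T - P n) * 2 := by
      have e1 : (∫ t in t1..t2, t ^ (-(1:ℝ)/2) * (T - P n))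
          = (T - P n) * ∫ t in t1..t2, t ^ (-(1:ℝ)/2) := by
        rw [← intervalIntegral.integral_const_mul]
        apply intervalIntegral.integral_congr
        intro t _
        ring
      rw [e1]
      apply mul_le_mul_of_nonneg_left _ (hTP n)
      have e2 : ∫ t in t1..t2, t ^ (-(1:ℝ)/2)
          = (t2 ^ ((1:ℝ)/2) - t1 ^ ((1:ℝ)/2))/((1:ℝ)/2) := by
        rw [integral_rpow (Or.inl (by norm_num))]
        norm_num
      rw [e2]
      have h3 : (0:ℝ) ≤ t1 ^ ((1:ℝ)/2) := Real.rpow_nonneg ht1.le _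
      have h4 : t2 ^ ((1:ℝ)/2) ≤ 1 := Real.rpow_le_one ht2pos.le ht2 (by norm_num)
      rw [div_le_iff₀ (by norm_num : (0:ℝ) < (1:ℝ)/2)]
      linarith
    have hcs := count_sum N h1 hd t1 t2 ht1 h12 K L hKmin hL n
    calc (∫ t in t1..t2, t ^ (-(1:ℝ)/2) * S t) ≤ _ := hmono
    _ = _ + _ := hsplit2
    _ ≤ B + (T - P n) * 2 := by
        rw [hfin]
        exact add_le_add hcs hconst
  -- take the limit n → ∞
  have hIleB : (∫ t in t1..t2, t ^ (-(1:ℝ)/2) * S t) ≤ B := by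
    have h0 : Tendsto (fun n => T - P n) atTop (nhds (T - T)) :=
      tendsto_const_nhds.sub hu_sum.hasSum.tendsto_sum_nat
    rw [sub_self] at h0
    have h2 : Tendsto (fun n => B + (T - P n) * 2) atTop (nhds (B + 0 * 2)) :=
      tendsto_const_nhds.add (h0.mul_const 2)
    rw [zero_mul, add_zero] at h2
    exact ge_of_tendsto h2 (Filter.Eventually.of_forall hIbound)
  -- conclusion
  have hBle : B ≤ 8 + 3 * x := by
    rw [hB]
    nlinarith [hcount]
  have hfinal : (∫ t in t1..t2, S t ^ 2) + (∫ t in t1..t2, t ^ (-(1:ℝ)/2) * S t)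
      ≤ 7 * B := by
    calc (∫ t in t1..t2, S t ^ 2) + (∫ t in t1..t2, t ^ (-(1:ℝ)/2) * S t)
        ≤ 6 * (∫ t in t1..t2, t ^ (-(1:ℝ)/2) * S t) + (∫ t in t1..t2, t ^ (-(1:ℝ)/2) * S t) := by
          linarith [hsq]
    _ = 7 * (∫ t in t1..t2, t ^ (-(1:ℝ)/2) * S t) := by ring
    _ ≤ 7 * B := by linarith [hIleB]
  calc (∫ t in t1..t2, (∑' k : ℕ, (N k : ℝ) * Real.exp (-(N k : ℝ) ^ 2 * t)) ^ 2) +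
      (∫ t in t1..t2, t ^ (-(1:ℝ) / 2) * ∑' k : ℕ, (N k : ℝ) * Real.exp (-(N k : ℝ) ^ 2 * t))
      = (∫ t in t1..t2, S t ^ 2) + (∫ t in t1..t2, t ^ (-(1:ℝ)/2) * S t) := by rfl
  _ ≤ 7 * B := hfinal
  _ ≤ 7 * (8 + 3 * x) := by linarith [hBle]
  _ ≤ 100 * (1 + x) := by nlinarith [hx0]

lemma setup (b γ : ℝ) (hb : 10 ≤ b) (hγ₁ : 1 < γ) (hγ₂ : γ < 2)
    (A : ℝ) (hA : 4 ≤ A) (M N : ℕ → ℕ)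
    (hM : ∀ k, M k = ⌊A ^ (b ^ k)⌋₊) (hN : ∀ k, N k = M k * ⌊(M k : ℝ) ^ (γ - 1)⌋₊) :
    1 ≤ N 0 ∧ (∀ k, A * (N k : ℝ) ≤ (N (k+1) : ℝ)) ∧ (∀ k, 2 * N k ≤ N (k+1)) := by
  have hA1 : (1:ℝ) < A := by linarith
  have hA0 : (0:ℝ) < A := by linarith
  have hbk1 : ∀ k : ℕ, (1:ℝ) ≤ b ^ k := fun k => one_le_pow₀ (by linarith)
  have hbk0 : ∀ k : ℕ, (0:ℝ) < b ^ k := fun k => lt_of_lt_of_le one_pos (hbk1 k)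
  have hrpow1 : ∀ k : ℕ, A ≤ A ^ (b ^ k) := by
    intro k
    calc A = A ^ (1:ℝ) := (Real.rpow_one A).symm
    _ ≤ A ^ (b ^ k) := Real.rpow_le_rpow_of_exponent_le hA1.le (hbk1 k)
  have hrpos : ∀ k : ℕ, (0:ℝ) < A ^ (b ^ k) := fun k => Real.rpow_pos_of_pos hA0 _
  have hM2 : ∀ k, 2 ≤ M k := by
    intro k
    rw [hM k]
    apply Nat.le_floor
    push_cast
    linarith [hrpow1 k]
  have hM2R : ∀ k, (2:ℝ) ≤ (M k : ℝ) := by intro k; exact_mod_cast hM2 k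
  have hflr : ∀ k, 1 ≤ ⌊(M k : ℝ) ^ (γ - 1)⌋₊ := by
    intro k
    apply Nat.le_floor
    push_cast
    apply Real.one_le_rpow (by linarith [hM2R k]) (by linarith)
  have hNM : ∀ k, M k ≤ N k := by
    intro k
    rw [hN k]
    calc M k = M k * 1 := (Nat.mul_one _).symm
    _ ≤ M k * ⌊(M k : ℝ) ^ (γ - 1)⌋₊ := Nat.mul_le_mul_left _ (hflr k)
  have hN0 : 1 ≤ N 0 := le_trans (by omega) (le_trans (hM2 0) (hNM 0))
  -- upper bound on N k
  have hupper : ∀ k, (N k : ℝ) ≤ A ^ (2 * b ^ k) := by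
    intro k
    have hMpos : (0:ℝ) < (M k : ℝ) := by linarith [hM2R k]
    have hMle : (M k : ℝ) ≤ A ^ (b ^ k) := by
      rw [hM k]
      exact Nat.floor_le (hrpos k).le
    have h1 : (N k : ℝ) = (M k : ℝ) * (⌊(M k : ℝ) ^ (γ - 1)⌋₊ : ℝ) := by
      rw [hN k]; push_cast; ring
    have h2 : (⌊(M k : ℝ) ^ (γ - 1)⌋₊ : ℝ) ≤ (M k : ℝ) ^ (γ - 1) :=
      Nat.floor_le (Real.rpow_nonneg hMpos.le _)
    have h3 : (N k : ℝ) ≤ (M k : ℝ) ^ γ := by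
      rw [h1]
      calc (M k : ℝ) * (⌊(M k : ℝ) ^ (γ - 1)⌋₊ : ℝ) ≤ (M k : ℝ) * (M k : ℝ) ^ (γ - 1) :=
            mul_le_mul_of_nonneg_left h2 hMpos.le
      _ = (M k : ℝ) ^ (1:ℝ) * (M k : ℝ) ^ (γ - 1) := by rw [Real.rpow_one]
      _ = (M k : ℝ) ^ γ := by rw [← Real.rpow_add hMpos]; ring_nf
    have h4 : (M k : ℝ) ^ γ ≤ (A ^ (b ^ k)) ^ γ :=
      Real.rpow_le_rpow hMpos.le hMle (by linarith)
    have h5 : (A ^ (b ^ k)) ^ γ = A ^ (b ^ k * γ) := by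
      rw [← Real.rpow_mul hA0.le]
    have h6 : A ^ (b ^ k * γ) ≤ A ^ (2 * b ^ k) := by
      apply Real.rpow_le_rpow_of_exponent_le hA1.le
      nlinarith [hbk0 k]
    calc (N k : ℝ) ≤ _ := h3
    _ ≤ _ := h4
    _ = _ := h5
    _ ≤ _ := h6
  -- growth
  have hgrow : ∀ k, A * (N k : ℝ) ≤ (N (k+1) : ℝ) := by
    intro k
    have hMle : A ^ (b ^ (k+1)) - 1 ≤ (M (k+1) : ℝ) := by
      rw [hM (k+1)]
      have := Nat.sub_one_lt_floor (A ^ (b ^ (k+1)))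
      linarith
    have hNge : A ^ (b ^ (k+1)) - 1 ≤ (N (k+1) : ℝ) := by
      have : (M (k+1) : ℝ) ≤ (N (k+1) : ℝ) := by exact_mod_cast hNM (k+1)
      linarith
    -- A^{b^{k+1}} ≥ 2 * A^{2 b^k + 1}
    have hexp : 2 * b ^ k + 8 ≤ b ^ (k+1) := by
      have h1 := hbk1 k
      calc 2 * b ^ k + 8 ≤ 2 * b ^ k + 8 * b ^ k := by linarith
      _ = 10 * b ^ k := by ring
      _ ≤ b * b ^ k := by nlinarith [hbk0 k]
      _ = b ^ (k+1) := by rw [pow_succ]; ring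
    have hstep : A ^ (2 * b ^ k + (8:ℝ)) ≤ A ^ (b ^ (k+1)) :=
      Real.rpow_le_rpow_of_exponent_le hA1.le hexp
    have hsplit : A ^ (2 * b ^ k + (8:ℝ)) = A ^ (2 * b ^ k + 1) * A ^ (7:ℝ) := by
      rw [← Real.rpow_add hA0]
      ring_nf
    have hA7 : (2:ℝ) ≤ A ^ (7:ℝ) := by
      calc (2:ℝ) ≤ A := by linarith
      _ = A ^ (1:ℝ) := (Real.rpow_one A).symm
      _ ≤ A ^ (7:ℝ) := Real.rpow_le_rpow_of_exponent_le hA1.le (by norm_num)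
    have hpos1 : (1:ℝ) ≤ A ^ (2 * b ^ k + 1) :=
      Real.one_le_rpow hA1.le (by nlinarith [hbk0 k])
    have hAN : A * (N k : ℝ) ≤ A ^ (2 * b ^ k + 1) := by
      have := hupper k
      calc A * (N k : ℝ) ≤ A * A ^ (2 * b ^ k) := mul_le_mul_of_nonneg_left this hA0.le
      _ = A ^ (1:ℝ) * A ^ (2 * b ^ k) := by rw [Real.rpow_one]
      _ = A ^ (2 * b ^ k + 1) := by rw [← Real.rpow_add hA0]; ring_nf
    calc A * (N k : ℝ) ≤ A ^ (2 * b ^ k + 1) := hAN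
    _ ≤ A ^ (b ^ (k+1)) - 1 := by
        have : 2 * A ^ (2 * b ^ k + 1) ≤ A ^ (2 * b ^ k + (8:ℝ)) := by
          rw [hsplit]
          nlinarith [hpos1]
        linarith
    _ ≤ (N (k+1) : ℝ) := hNge
  refine ⟨hN0, hgrow, ?_⟩
  intro k
  have h2 : (2:ℝ) * (N k : ℝ) ≤ A * (N k : ℝ) := by
    apply mul_le_mul_of_nonneg_right (by linarith) (by positivity)
  have := le_trans h2 (hgrow k)
  exact_mod_cast this

end SeriesEstAux

/-- **Scalar series estimates for the frequency sequence (core of Proposition 3.13).**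
Let `b ≥ 10`, `γ ∈ (1,2)` and `m ∈ ℕ`. There are `A₀ ≥ 2`, `C_m > 0` and `C > 0` such
that for every `A ≥ A₀`, with `M_k = ⌊A^{b^k}⌋` and `N_k = M_k ⌊M_k^{γ-1}⌋`:
(i) `∑_k N_k^{1+m} exp(−N_k² t) ≤ C_m t^{−(m+1)/2} exp(−N₀² t / C_m)` for all `t > 0`; and
(ii) for `0 < t₁ ≤ t₂ ≤ 1`, the `L²`-in-time and weighted `L¹`-in-time norms of
`∑_k N_k exp(−N_k² t)` on `[t₁,t₂]` are bounded by `C (1 + (log A)⁻¹ log(t₂/t₁))`. -/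
theorem series_estimates (b γ : ℝ) (hb : 10 ≤ b) (hγ₁ : 1 < γ) (hγ₂ : γ < 2) (m : ℕ) :
    ∃ A₀ : ℝ, 2 ≤ A₀ ∧ ∃ Cm : ℝ, 0 < Cm ∧ ∃ C : ℝ, 0 < C ∧
      ∀ A : ℝ, A₀ ≤ A →
        ∀ M N : ℕ → ℕ,
          (∀ k, M k = ⌊A ^ (b ^ k)⌋₊) →
          (∀ k, N k = M k * ⌊(M k : ℝ) ^ (γ - 1)⌋₊) →
          -- (i) pointwise-in-time bound for the heat-dominated series
          (∀ t : ℝ, 0 < t →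
            ∑' k : ℕ, (N k : ℝ) ^ (1 + m) * Real.exp (-(N k : ℝ) ^ 2 * t) ≤
              Cm * t ^ (-((m : ℝ) + 1) / 2) * Real.exp (-(N 0 : ℝ) ^ 2 * t / Cm)) ∧
          -- (ii) L²-in-time and weighted L¹-in-time bounds
          (∀ t₁ t₂ : ℝ, 0 < t₁ → t₁ ≤ t₂ → t₂ ≤ 1 →
            (∫ t in t₁..t₂,
                (∑' k : ℕ, (N k : ℝ) * Real.exp (-(N k : ℝ) ^ 2 * t)) ^ 2) +
              (∫ t in t₁..t₂,
                t ^ (-(1 : ℝ) / 2) *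
                  ∑' k : ℕ, (N k : ℝ) * Real.exp (-(N k : ℝ) ^ 2 * t)) ≤
              C * (1 + (Real.log A)⁻¹ * Real.log (t₂ / t₁))) := by
  refine ⟨4, by norm_num, 6 * (1+m).factorial * 2^(m+1), ?_, 100, by norm_num, ?_⟩
  · have h1 := Nat.factorial_pos (1+m)
    have h1' : (0:ℝ) < (1+m).factorial := by exact_mod_cast h1
    positivity
  · intro A hA M N hM hN
    obtain ⟨hN0, hgrow, hd⟩ := SeriesEstAux.setup b γ hb hγ₁ hγ₂ A hA M N hM hN
    constructor
    · intro t ht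
      exact SeriesEstAux.part_i N hN0 hd m t ht
    · intro t₁ t₂ h₁ h₂ h₃
      exact SeriesEstAux.part_ii N hN0 hd A (by linarith) hgrow t₁ t₂ h₁ h₂ h₃
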